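/- For a > 0 define v_a : ℝ → ℝ by v_a(x) = 2·arctan(x/a). Let n ≥ 1, let K, L ≥ 0 be natural numbers, let α > 0, β ∈ [0,1), a_1,…,a_K > 0, b_1,…,b_L > 0, and let μ = (μ_1,…,μ_n) ∈ ℤ^n with μ_1 > μ_2 > … > μ_n. If ξ = (ξ_1,…,ξ_n) ∈ ℝ^n satisfies, for every j ∈ {1,…,n}, the equation α ξ_j + Σ_{k=1}^K v_{a_k}(ξ_j) + Σ_{j′≠j} Σ_{l=1}^L v_{b_l}(ξ_j − ξ_{j′}) = 2π(μ_j + β), then ξ satisfies the rational Bethe equations of type A: for every j ∈ {1,…,n}, exp(i α ξ_j) = exp(2πi β) · ∏_{k=1}^K (i a_k + ξ_j)/(i a_k − ξ_j) · ∏_{j′≠j} ∏_{l=1}^L (i b_l + ξ_j − ξ_{j′})/(i b_l − ξ_j + ξ_{j′}) as an identity of complex numbers. -/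

import Mathlib

open Real Finset

/-- The rational function `v_a(x) = 2 arctan(x/a)`. -/
noncomputable def vRat (a x : ℝ) : ℝ := 2 * Real.arctan (x / a)

lemma vRat_exp_key (a x : ℝ) (ha : 0 < a) :
    Complex.exp (-(Complex.I * (vRat a x : ℂ))) =
      (Complex.I * a + x) / (Complex.I * a - x) := by
  have hden : (Complex.I * a - x : ℂ) ≠ 0 := by
    intro h
    have him := congrArg Complex.im h
    simp [Complex.mul_im] at him
    exact absurd him (ne_of_gt ha)
  have hs0 : (0:ℝ) < 1 + (x / a) ^ 2 := by positivity
  have hsq : Real.sqrt (1 + (x / a) ^ 2) * Real.sqrt (1 + (x / a) ^ 2) = 1 + (x / a) ^ 2 :=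
    Real.mul_self_sqrt hs0.le
  have hsne : Real.sqrt (1 + (x / a) ^ 2) ≠ 0 := by positivity
  have e1 : -(Complex.I * (vRat a x : ℂ)) = ((-(vRat a x) : ℝ) : ℂ) * Complex.I := by
    push_cast; ring
  rw [e1, Complex.exp_mul_I, ← Complex.ofReal_cos, ← Complex.ofReal_sin]
  have hc : Real.cos (-(vRat a x)) = (1 - (x / a) ^ 2) / (1 + (x / a) ^ 2) := by
    rw [Real.cos_neg]
    unfold vRat
    rw [Real.cos_two_mul, Real.cos_arctan]
    rw [div_pow, one_pow, sq, hsq]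
    field_simp
    ring
  have hsin : Real.sin (-(vRat a x)) = -(2 * (x / a)) / (1 + (x / a) ^ 2) := by
    rw [Real.sin_neg]
    unfold vRat
    rw [Real.sin_two_mul, Real.sin_arctan, Real.cos_arctan]
    field_simp
    have hq : √((a ^ 2 + x ^ 2) / a ^ 2) ^ 2 = (a ^ 2 + x ^ 2) / a ^ 2 :=
      Real.sq_sqrt (by positivity)
    rw [hq]
    field_simp
  rw [hc, hsin, eq_div_iff hden]
  have ha' : (a:ℂ) ≠ 0 := by exact_mod_cast ha.ne'
  have h2 : ((a:ℂ)^2 + (x:ℂ)^2) ≠ 0 := by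
    have : (0:ℝ) < a^2 + x^2 := by positivity
    have := this.ne'
    exact_mod_cast fun h => this (by exact_mod_cast h)
  push_cast
  field_simp
  ring_nf
  simp only [Complex.I_sq]
  ring

lemma exp_neg_sum_mul_I {ι : Type*} (s : Finset ι) (f : ι → ℝ) :
    Complex.exp (((-∑ i ∈ s, f i : ℝ) : ℂ) * Complex.I) =
      ∏ i ∈ s, Complex.exp (-(Complex.I * (f i : ℂ))) := by
  rw [← Complex.exp_sum]
  congr 1
  push_cast
  rw [neg_mul, Finset.sum_mul, ← Finset.sum_neg_distrib]
  exact Finset.sum_congr rfl fun i _ => by ring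

/-- Solutions of the rational type A critical-point system solve the rational Bethe
Ansatz equations of type A. -/
theorem ratA_critical_solves_bethe
    (n K L : ℕ) (hn : 1 ≤ n)
    (α β : ℝ) (hα : 0 < α) (hβ0 : 0 ≤ β) (hβ1 : β < 1)
    (a : Fin K → ℝ) (b : Fin L → ℝ)
    (ha : ∀ k, 0 < a k) (hb : ∀ l, 0 < b l)
    (μ : Fin n → ℤ) (hμ : ∀ j j' : Fin n, j < j' → μ j' < μ j)
    (ξ : Fin n → ℝ)
    (hξ : ∀ j : Fin n,
      α * ξ j + (∑ k, vRat (a k) (ξ j)) +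
      (∑ j' ∈ Finset.univ.erase j, ∑ l, vRat (b l) (ξ j - ξ j'))
      = 2 * π * ((μ j : ℝ) + β)) :
    ∀ j : Fin n,
      Complex.exp (Complex.I * (α : ℂ) * (ξ j : ℂ)) =
      Complex.exp (2 * π * Complex.I * (β : ℂ)) *
      (∏ k, (Complex.I * (a k : ℂ) + (ξ j : ℂ)) / (Complex.I * (a k : ℂ) - (ξ j : ℂ))) *
      (∏ j' ∈ Finset.univ.erase j, ∏ l,
        (Complex.I * (b l : ℂ) + (ξ j : ℂ) - (ξ j' : ℂ)) /
        (Complex.I * (b l : ℂ) - (ξ j : ℂ) + (ξ j' : ℂ))) := by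
  intro j
  have h := hξ j
  have hx : α * ξ j = 2 * π * β + (μ j : ℝ) * (2 * π) +
      (-(∑ k, vRat (a k) (ξ j))) +
      (-(∑ j' ∈ Finset.univ.erase j, ∑ l, vRat (b l) (ξ j - ξ j'))) := by
    have hr : 2 * π * ((μ j : ℝ) + β) = 2 * π * β + (μ j : ℝ) * (2 * π) := by ring
    linarith [hr ▸ h]
  have e0 : Complex.I * (α : ℂ) * (ξ j : ℂ) = ((α * ξ j : ℝ) : ℂ) * Complex.I := by
    push_cast; ring
  rw [e0, show ((α * ξ j : ℝ) : ℂ) = ((2 * π * β + (μ j : ℝ) * (2 * π) +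
      (-(∑ k, vRat (a k) (ξ j))) +
      (-(∑ j' ∈ Finset.univ.erase j, ∑ l, vRat (b l) (ξ j - ξ j'))) : ℝ) : ℂ)
    from congrArg Complex.ofReal hx]
  rw [Complex.ofReal_add, Complex.ofReal_add, Complex.ofReal_add,
    add_mul, add_mul, add_mul, Complex.exp_add, Complex.exp_add, Complex.exp_add]
  have hA : Complex.exp (((2 * π * β : ℝ) : ℂ) * Complex.I) =
      Complex.exp (2 * π * Complex.I * (β : ℂ)) := by
    push_cast; ring_nf
  have hB : Complex.exp ((((μ j : ℝ) * (2 * π) : ℝ) : ℂ) * Complex.I) = 1 := by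
    have := Complex.exp_int_mul_two_pi_mul_I (μ j)
    rw [← this]; congr 1; push_cast; ring
  have hC : Complex.exp (((-(∑ k, vRat (a k) (ξ j)) : ℝ) : ℂ) * Complex.I) =
      ∏ k, (Complex.I * (a k : ℂ) + (ξ j : ℂ)) / (Complex.I * (a k : ℂ) - (ξ j : ℂ)) := by
    rw [exp_neg_sum_mul_I]
    exact Finset.prod_congr rfl fun k _ => vRat_exp_key (a k) (ξ j) (ha k)
  have hD : Complex.exp (((-(∑ j' ∈ Finset.univ.erase j, ∑ l, vRat (b l) (ξ j - ξ j')) : ℝ) : ℂ)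
        * Complex.I) =
      ∏ j' ∈ Finset.univ.erase j, ∏ l,
        (Complex.I * (b l : ℂ) + (ξ j : ℂ) - (ξ j' : ℂ)) /
        (Complex.I * (b l : ℂ) - (ξ j : ℂ) + (ξ j' : ℂ)) := by
    rw [exp_neg_sum_mul_I]
    refine Finset.prod_congr rfl fun j' _ => ?_
    have : -(Complex.I * ((∑ l, vRat (b l) (ξ j - ξ j') : ℝ) : ℂ)) =
        ((-∑ l, vRat (b l) (ξ j - ξ j') : ℝ) : ℂ) * Complex.I := by push_cast; ring
    rw [this, exp_neg_sum_mul_I]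
    refine Finset.prod_congr rfl fun l _ => ?_
    rw [vRat_exp_key (b l) (ξ j - ξ j') (hb l)]
    congr 1 <;> push_cast <;> ring
  rw [hA, hB, hC, hD]
  ring
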